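/- arXiv:1705.05675 — 2 statements merged into one kernel-verified Lean document; each statement's English description precedes it below -/
import Mathlib

section
/- For all natural numbers a, b, c, n, p, we have ∑_{k=0}^{n} C(a,k)·C(b,n−k)·C(k,c)·C(p+k, a+b−c) = C(n+p−b, n−c)·C(p+c, a+b−n)·C(a,c). -/
open Finset

/-- trinomial revision without the `k ≤ n` hypothesis -/
lemma choose_mul' (n k s : ℕ) (hsk : s ≤ k) :
    n.choose k * k.choose s = n.choose s * (n - s).choose (k - s) := by
  by_cases hkn : k ≤ n
  · exact Nat.choose_mul hsk
  · have h1 : n.choose k = 0 := Nat.choose_eq_zero_of_lt (by omega)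
    by_cases hsn : s ≤ n
    · have h2 : (n - s).choose (k - s) = 0 := Nat.choose_eq_zero_of_lt (by omega)
      rw [h1, h2, zero_mul, mul_zero]
    · have h2 : n.choose s = 0 := Nat.choose_eq_zero_of_lt (by omega)
      rw [h1, h2, zero_mul, zero_mul]

/-- Vandermonde as a range sum -/
lemma vdm (x y k : ℕ) :
    (x + y).choose k = ∑ i ∈ range (k + 1), x.choose i * y.choose (k - i) := by
  rw [Nat.add_choose_eq, Finset.Nat.sum_antidiagonal_eq_sum_range_succ_mk]

lemma inner1 (A b m t : ℕ) (hm : m ≤ A + b) (ht : t ≤ A + b) :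
    ∑ j ∈ range (m + 1), A.choose j * j.choose t * b.choose (m - j)
      = A.choose t * (A + b - t).choose (A + b - m) := by
  by_cases htm : t ≤ m
  · have h0 : ∑ j ∈ range (m + 1), A.choose j * j.choose t * b.choose (m - j)
        = ∑ j ∈ Ico t (m + 1), A.choose j * j.choose t * b.choose (m - j) := by
      refine (sum_subset ?_ ?_).symm
      · intro j hj; simp only [mem_Ico, mem_range] at *; omega
      · intro j hj hj'
        simp only [mem_Ico, mem_range] at hj hj'
        rw [Nat.choose_eq_zero_of_lt (show j < t by omega), mul_zero, zero_mul]
    rw [h0, Finset.sum_Ico_eq_sum_range]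
    have h1 : ∑ i ∈ range (m + 1 - t), A.choose (t + i) * (t + i).choose t * b.choose (m - (t + i))
        = ∑ i ∈ range ((m - t) + 1), A.choose t * ((A - t).choose i * b.choose ((m - t) - i)) := by
      rw [show m + 1 - t = (m - t) + 1 by omega]
      refine sum_congr rfl fun i _ => ?_
      rw [choose_mul' A (t + i) t (by omega), show t + i - t = i by omega,
        show m - (t + i) = (m - t) - i by omega]
      ring
    rw [h1, ← mul_sum, ← vdm]
    by_cases htA : t ≤ A
    · rw [show (A - t) + b = A + b - t by omega,
        show A + b - m = (A + b - t) - (m - t) by omega,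
        Nat.choose_symm (show m - t ≤ A + b - t by omega)]
    · rw [Nat.choose_eq_zero_of_lt (show A < t by omega), zero_mul, zero_mul]
  · have h0 : ∑ j ∈ range (m + 1), A.choose j * j.choose t * b.choose (m - j) = 0 := by
      refine Finset.sum_eq_zero fun j hj => ?_
      simp only [mem_range] at hj
      rw [Nat.choose_eq_zero_of_lt (show j < t by omega), mul_zero, zero_mul]
    rw [h0, Nat.choose_eq_zero_of_lt (show A + b - t < A + b - m by omega), mul_zero]

lemma keyL (A b m q : ℕ) (hm : m ≤ A + b) :
    ∑ j ∈ range (m + 1), A.choose j * b.choose (m - j) * (q + j).choose (A + b)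
      = (m + q - b).choose m * q.choose (A + b - m) := by
  calc ∑ j ∈ range (m + 1), A.choose j * b.choose (m - j) * (q + j).choose (A + b)
      = ∑ j ∈ range (m + 1), ∑ t ∈ range (A + b + 1),
          A.choose j * j.choose t * b.choose (m - j) * q.choose (A + b - t) := by
        refine sum_congr rfl fun j _ => ?_
        rw [show q + j = j + q from add_comm _ _, vdm, mul_sum]
        exact sum_congr rfl fun t _ => by ring
    _ = ∑ t ∈ range (A + b + 1),
          (∑ j ∈ range (m + 1), A.choose j * j.choose t * b.choose (m - j)) * q.choose (A + b - t) := by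
        rw [sum_comm]
        exact sum_congr rfl fun t _ => (sum_mul _ _ _).symm
    _ = ∑ t ∈ range (A + b + 1),
          A.choose t * (A + b - t).choose (A + b - m) * q.choose (A + b - t) := by
        refine sum_congr rfl fun t ht => ?_
        rw [inner1 A b m t hm (by simp only [mem_range] at ht; omega)]
    _ = ∑ u ∈ range (A + b + 1),
          A.choose (A + b - u) * u.choose (A + b - m) * q.choose u := by
        rw [← Finset.sum_range_reflect]
        refine sum_congr rfl fun u hu => ?_
        simp only [mem_range] at hu
        rw [show A + b + 1 - 1 - u = A + b - u by omega, show A + b - (A + b - u) = u by omega]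
    _ = ∑ u ∈ Ico (A + b - m) (A + b + 1),
          A.choose (A + b - u) * u.choose (A + b - m) * q.choose u := by
        refine (sum_subset ?_ ?_).symm
        · intro u hu; simp only [mem_Ico, mem_range] at *; omega
        · intro u hu hu'
          simp only [mem_Ico, mem_range] at hu hu'
          rw [Nat.choose_eq_zero_of_lt (show u < A + b - m by omega), mul_zero, zero_mul]
    _ = ∑ v ∈ range (m + 1),
          q.choose (A + b - m) * ((q - (A + b - m)).choose v * A.choose (m - v)) := by
        rw [Finset.sum_Ico_eq_sum_range, show A + b + 1 - (A + b - m) = m + 1 by omega]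
        refine sum_congr rfl fun v _ => ?_
        have h := choose_mul' q (A + b - m + v) (A + b - m) (by omega)
        rw [show A + b - m + v - (A + b - m) = v by omega] at h
        calc A.choose (A + b - (A + b - m + v)) * (A + b - m + v).choose (A + b - m)
              * q.choose (A + b - m + v)
            = q.choose (A + b - m + v) * (A + b - m + v).choose (A + b - m)
              * A.choose (A + b - (A + b - m + v)) := by ring
          _ = q.choose (A + b - m) * ((q - (A + b - m)).choose v * A.choose (m - v)) := by
              rw [h, show A + b - (A + b - m + v) = m - v by omega]; ring
    _ = q.choose (A + b - m) * ((q - (A + b - m)) + A).choose m := by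
        rw [← mul_sum, ← vdm]
    _ = (m + q - b).choose m * q.choose (A + b - m) := by
        by_cases hDq : A + b - m ≤ q
        · rw [show (q - (A + b - m)) + A = m + q - b by omega]; ring
        · rw [Nat.choose_eq_zero_of_lt (show q < A + b - m by omega), mul_zero, zero_mul]

lemma natMain (a b c n p : ℕ) (hca : c ≤ a) (hcn : c ≤ n) (hnab : n ≤ a + b) :
    ∑ k ∈ range (n + 1), a.choose k * b.choose (n - k) * k.choose c * (p + k).choose (a + b - c)
      = (n + p - b).choose (n - c) * (p + c).choose (a + b - n) * a.choose c := by
  have h0 : ∑ k ∈ range (n + 1),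
        a.choose k * b.choose (n - k) * k.choose c * (p + k).choose (a + b - c)
      = ∑ k ∈ Ico c (n + 1),
        a.choose k * b.choose (n - k) * k.choose c * (p + k).choose (a + b - c) := by
    refine (sum_subset ?_ ?_).symm
    · intro k hk; simp only [mem_Ico, mem_range] at *; omega
    · intro k hk hk'
      simp only [mem_Ico, mem_range] at hk hk'
      rw [Nat.choose_eq_zero_of_lt (show k < c by omega), mul_zero, zero_mul]
  rw [h0, Finset.sum_Ico_eq_sum_range, show n + 1 - c = (n - c) + 1 by omega]
  have h1 : ∀ j, a.choose (c + j) * b.choose (n - (c + j)) * (c + j).choose c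
        * (p + (c + j)).choose (a + b - c)
      = a.choose c * ((a - c).choose j * b.choose ((n - c) - j)
        * ((p + c) + j).choose ((a - c) + b)) := by
    intro j
    have h := choose_mul' a (c + j) c (by omega)
    rw [show c + j - c = j by omega] at h
    calc a.choose (c + j) * b.choose (n - (c + j)) * (c + j).choose c
          * (p + (c + j)).choose (a + b - c)
        = a.choose (c + j) * (c + j).choose c
          * (b.choose (n - (c + j)) * (p + (c + j)).choose (a + b - c)) := by ring
      _ = a.choose c * ((a - c).choose j * b.choose ((n - c) - j)
          * ((p + c) + j).choose ((a - c) + b)) := by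
          rw [h, show n - (c + j) = (n - c) - j by omega,
            show p + (c + j) = (p + c) + j by omega,
            show a + b - c = (a - c) + b by omega]
          ring
  calc ∑ j ∈ range ((n - c) + 1), a.choose (c + j) * b.choose (n - (c + j)) * (c + j).choose c
        * (p + (c + j)).choose (a + b - c)
      = a.choose c * ∑ j ∈ range ((n - c) + 1), (a - c).choose j * b.choose ((n - c) - j)
        * ((p + c) + j).choose ((a - c) + b) := by
        rw [mul_sum]
        refine sum_congr rfl fun j _ => ?_
        rw [h1 j]
    _ = a.choose c * ((n - c + (p + c) - b).choose (n - c)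
        * (p + c).choose ((a - c) + b - (n - c))) := by
        rw [keyL (a - c) b (n - c) (p + c) (by omega)]
    _ = (n + p - b).choose (n - c) * (p + c).choose (a + b - n) * a.choose c := by
        rw [show n - c + (p + c) - b = n + p - b by omega,
          show (a - c) + b - (n - c) = a + b - n by omega]
        ring

/-- Binomial coefficient for integers: `C x y` is the usual binomial coefficient
when `0 ≤ y ≤ x`, and `0` otherwise. -/
def C (x y : ℤ) : ℤ := if 0 ≤ y ∧ y ≤ x then (x.toNat.choose y.toNat : ℤ) else 0


lemma C_natCast (x y : ℕ) : C x y = (x.choose y : ℤ) := by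
  unfold C
  split
  next h => simp
  next h =>
    have hxy : x < y := by
      by_contra h'
      exact h ⟨by positivity, by exact_mod_cast not_lt.mp h'⟩
    rw [Nat.choose_eq_zero_of_lt hxy]; simp

lemma C_zero_of_neg {x y : ℤ} (h : y < 0) : C x y = 0 := by
  unfold C; rw [if_neg]; rintro ⟨h1, _⟩; omega

lemma C_zero_of_lt {x y : ℤ} (h : x < y) : C x y = 0 := by
  unfold C; rw [if_neg]; rintro ⟨_, h2⟩; omega

theorem stmt_7 (a b c n p : ℕ) :
    ∑ k ∈ Finset.range (n + 1), C a k * C b ((n : ℤ) - k) * C k c * C ((p : ℤ) + k) ((a : ℤ) + b - c) = C ((n : ℤ) + p - b) ((n : ℤ) - c) * C ((p : ℤ) + c) ((a : ℤ) + b - n) * C a c := by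
  by_cases hca : c ≤ a
  · by_cases hcn : c ≤ n
    · by_cases hnab : n ≤ a + b
      · by_cases hbnp : b ≤ n + p
        · -- main case: everything reduces to the natural-number identity
          have hL : ∀ k ∈ range (n + 1),
              C a k * C b ((n : ℤ) - k) * C k c * C ((p : ℤ) + k) ((a : ℤ) + b - c)
                = ((a.choose k * b.choose (n - k) * k.choose c
                    * (p + k).choose (a + b - c) : ℕ) : ℤ) := by
            intro k hk
            simp only [mem_range] at hk
            rw [show (n : ℤ) - k = ((n - k : ℕ) : ℤ) by push_cast <;> omega,
              show (p : ℤ) + k = ((p + k : ℕ) : ℤ) by push_cast <;> omega,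
              show (a : ℤ) + b - c = ((a + b - c : ℕ) : ℤ) by push_cast <;> omega,
              C_natCast, C_natCast, C_natCast, C_natCast]
            push_cast; ring
          rw [Finset.sum_congr rfl hL, ← Nat.cast_sum,
            show (n : ℤ) + p - b = ((n + p - b : ℕ) : ℤ) by push_cast <;> omega,
            show (n : ℤ) - c = ((n - c : ℕ) : ℤ) by push_cast <;> omega,
            show (p : ℤ) + c = ((p + c : ℕ) : ℤ) by push_cast <;> omega,
            show (a : ℤ) + b - n = ((a + b - n : ℕ) : ℤ) by push_cast <;> omega,
            C_natCast, C_natCast, C_natCast]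
          exact_mod_cast congrArg (Nat.cast : ℕ → ℤ) (natMain a b c n p hca hcn hnab)
        · -- b > n + p : both sides vanish
          rw [C_zero_of_lt (show (n : ℤ) + p - b < (n : ℤ) - c by push_cast <;> omega),
            zero_mul, zero_mul]
          refine Finset.sum_eq_zero fun k hk => ?_
          simp only [mem_range] at hk
          rw [C_zero_of_lt (show (p : ℤ) + k < (a : ℤ) + b - c by push_cast <;> omega), mul_zero]
      · -- n > a + b : both sides vanish
        rw [C_zero_of_neg (show (a : ℤ) + b - n < 0 by push_cast <;> omega), mul_zero, zero_mul]
        refine Finset.sum_eq_zero fun k hk => ?_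
        simp only [mem_range] at hk
        by_cases hka : k ≤ a
        · rw [C_zero_of_lt (show (b : ℤ) < (n : ℤ) - k by push_cast <;> omega),
            mul_zero, zero_mul, zero_mul]
        · rw [C_zero_of_lt (show (a : ℤ) < (k : ℤ) by push_cast <;> omega),
            zero_mul, zero_mul, zero_mul]
    · -- c > n : both sides vanish
      rw [C_zero_of_neg (show (n : ℤ) - c < 0 by push_cast <;> omega), zero_mul, zero_mul]
      refine Finset.sum_eq_zero fun k hk => ?_
      simp only [mem_range] at hk
      rw [C_zero_of_lt (show (k : ℤ) < (c : ℤ) by push_cast <;> omega), mul_zero, zero_mul]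
  · -- c > a : both sides vanish
    rw [C_zero_of_lt (show (a : ℤ) < (c : ℤ) by push_cast <;> omega), mul_zero]
    refine Finset.sum_eq_zero fun k hk => ?_
    by_cases hkc : k < c
    · rw [C_zero_of_lt (show (k : ℤ) < (c : ℤ) by push_cast <;> omega), mul_zero, zero_mul]
    · rw [C_zero_of_lt (show (a : ℤ) < (k : ℤ) by push_cast <;> omega),
        zero_mul, zero_mul, zero_mul]
end

section
/- For all natural numbers a, b, c, m, p, we have ∑_{k=0}^{a} C(a,k)·C(b,m+k)·C(k,c)·C(p+k, a+b−c) = C(p−m, b−c−m)·C(p+c, m+a)·C(a,c). -/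
lemma C_eq_zero {x y : ℤ} (h : ¬(0 ≤ y ∧ y ≤ x)) : C x y = 0 := if_neg h

set_option linter.unreachableTactic false
set_option linter.unusedTactic false

lemma C_trinom (x y z : ℤ) : C x y * C y z = C x z * C (x - z) (y - z) := by
  unfold C
  split_ifs with h1 h2 h3 h4 <;>
    first
      | (rw [show (x - z).toNat = x.toNat - z.toNat by omega,
             show (y - z).toNat = y.toNat - z.toNat by omega,
             ← Nat.cast_mul, ← Nat.cast_mul, Nat.choose_mul (by omega)])
      | (exfalso; omega)
      | ring
lemma C_symm {x : ℤ} (hx : 0 ≤ x) (y : ℤ) : C x y = C x (x - y) := by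
  unfold C
  split_ifs with h1 h2 <;>
    first
      | (exfalso; omega)
      | (rw [show (x - y).toNat = x.toNat - y.toNat by omega, Nat.choose_symm (by omega)])
      | rfl
lemma C_pascal (x : ℤ) (hx : 0 ≤ x) (z : ℤ) : C (x + 1) z = C x (z - 1) + C x z := by
  unfold C
  split_ifs with h1 h2 h3 h4 h5 h6 h7 <;>
    first
      | (exfalso; omega)
      | (rw [show (x+1).toNat = x.toNat + 1 by omega, show z.toNat = x.toNat + 1 by omega,
          show (z-1).toNat = x.toNat by omega]; simp)
      | (rw [show z.toNat = 0 by omega]; simp)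
      | (rw [show (x+1).toNat = x.toNat + 1 by omega, show z.toNat = (z-1).toNat + 1 by omega,
          Nat.choose_succ_succ']; push_cast; ring)
      | simp
      | (rw [Nat.choose_eq_zero_of_lt (by omega)]; simp)

lemma C_zero (y : ℤ) : C 0 y = if y = 0 then 1 else 0 := by
  unfold C; split_ifs <;> first | (exfalso; omega) | (rw [show y.toNat = 0 by omega]; simp) | simp

lemma C_vdm0 (u : ℕ) : ∀ (v n : ℕ) (s : ℤ), u < n →
    ∑ i ∈ Finset.range n, C u i * C v (s - i) = C (u + v) s := by
  induction u with
  | zero =>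
    intro v n s hn
    rw [Finset.sum_eq_single 0]
    · simp [C_zero]
    · intro i _ hi
      rw [show ((0:ℕ):ℤ) = 0 by simp, C_zero]
      simp [hi]
    · intro h; exact absurd (Finset.mem_range.2 hn) h
  | succ u ih =>
    intro v n s hn
    obtain ⟨n, rfl⟩ : ∃ n', n = n' + 1 := ⟨n - 1, by omega⟩
    have key : ∀ i : ℕ, C (↑(u + 1)) (i : ℤ) = C u (i - 1) + C u i := by
      intro i
      have := C_pascal u (by positivity) i
      push_cast
      push_cast at this
      linarith
    calc ∑ i ∈ Finset.range (n+1), C (↑(u+1)) (i:ℤ) * C v (s - i)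
        = ∑ i ∈ Finset.range (n+1), (C u ((i:ℤ) - 1) * C v (s - i) + C u (i:ℤ) * C v (s - i)) := by
          refine Finset.sum_congr rfl fun i _ => ?_
          rw [key i]; ring
      _ = (∑ i ∈ Finset.range (n+1), C u ((i:ℤ) - 1) * C v (s - i))
          + ∑ i ∈ Finset.range (n+1), C u (i:ℤ) * C v (s - i) := Finset.sum_add_distrib
      _ = C (u + v) (s - 1) + C (u + v) s := by
          congr 1
          · rw [Finset.sum_range_succ']
            have h0 : C (u:ℤ) (((0:ℕ):ℤ) - 1) * C v (s - ((0:ℕ):ℤ)) = 0 := by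
              have : C (u:ℤ) (((0:ℕ):ℤ) - 1) = 0 := C_eq_zero (by intro ⟨h1,h2⟩; push_cast at h1; try omega)
              rw [this]; ring
            rw [h0, add_zero]
            have := ih v n (s - 1) (by omega)
            rw [← this]
            refine Finset.sum_congr rfl fun i _ => ?_
            push_cast; ring_nf
          · exact ih v (n+1) s (by omega)
      _ = C (↑(u+1) + v) s := by
          have := C_pascal ((u:ℤ) + v) (by positivity) s
          push_cast at this ⊢
          rw [show ((u:ℤ) + 1 + v) = (u:ℤ) + v + 1 by ring]
          linarith

lemma C_vdm (u v t : ℕ) : ∀ (n : ℕ) (s : ℤ), u + t < n →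
    ∑ i ∈ Finset.range n, C u ((i:ℤ) - t) * C v (s - i) = C (u + v) (s - t) := by
  induction t with
  | zero => intro n s hn; simpa using C_vdm0 u v n s (by omega)
  | succ t ih =>
    intro n s hn
    obtain ⟨n, rfl⟩ : ∃ n', n = n' + 1 := ⟨n - 1, by omega⟩
    rw [Finset.sum_range_succ']
    have h0 : C (u:ℤ) ((0:ℕ) - ↑(t+1) : ℤ) * C v (s - (0:ℕ)) = 0 := by
      rw [C_eq_zero (by intro ⟨h1,h2⟩; push_cast at h1; try omega)]; ring
    rw [h0, add_zero]
    have := ih n (s - 1) (by omega)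
    calc ∑ i ∈ Finset.range n, C u ((↑(i+1):ℤ) - ↑(t+1)) * C v (s - ↑(i+1))
        = ∑ i ∈ Finset.range n, C u ((i:ℤ) - t) * C v ((s-1) - i) := by
          refine Finset.sum_congr rfl fun i _ => ?_
          push_cast; ring_nf
      _ = C (u + v) ((s - 1) - t) := this
      _ = C (u + v) (s - ↑(t+1)) := by push_cast; ring_nf

theorem stmt_14 (a b c m p : ℕ) :
    ∑ k ∈ Finset.range (a + 1), C a k * C b ((m : ℤ) + k) * C k c * C ((p : ℤ) + k) ((a : ℤ) + b - c) = C ((p : ℤ) - m) ((b : ℤ) - c - m) * C ((p : ℤ) + c) ((m : ℤ) + a) * C a c := by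
  set S : ℤ := (a:ℤ) + b - c with hS
  by_cases hca : c ≤ a
  swap
  · -- a < c : both sides zero
    rw [Finset.sum_eq_zero, show C (a:ℤ) (c:ℤ) = 0 from C_eq_zero (by intro ⟨g1,g2⟩; omega),
      mul_zero]
    intro k hk
    have hk' : k ≤ a := by have := Finset.mem_range.mp hk; omega
    rw [show C (k:ℤ) (c:ℤ) = 0 from C_eq_zero (by intro ⟨g1,g2⟩; omega)]
    ring
  by_cases hmp : m ≤ p
  swap
  · -- p < m : both sides zero
    rw [show C ((p:ℤ) - m) ((b:ℤ) - c - m) = 0 from C_eq_zero (by intro ⟨g1,g2⟩; omega),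
      zero_mul, zero_mul]
    apply Finset.sum_eq_zero
    intro k hk
    have hk' : k ≤ a := by have := Finset.mem_range.mp hk; omega
    by_cases h1 : (c:ℤ) ≤ k
    · by_cases h2 : (m:ℤ) + k ≤ b
      · rw [show C ((p:ℤ) + k) S = 0 from C_eq_zero (by intro ⟨g1,g2⟩; rw [hS] at g1 g2; omega)]
        ring
      · rw [show C (b:ℤ) ((m:ℤ) + k) = 0 from C_eq_zero (by intro ⟨g1,g2⟩; omega)]
        ring
    · rw [show C (k:ℤ) (c:ℤ) = 0 from C_eq_zero (by intro ⟨g1,g2⟩; omega)]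
      ring
  -- main case: c ≤ a, m ≤ p
  have hv : ∀ k : ℕ, C ((p:ℤ) + k) S
      = ∑ i ∈ Finset.range (p+1), C ((p - m : ℕ) : ℤ) (i : ℤ) * C ((m + k : ℕ) : ℤ) (S - i) := by
    intro k
    have h := C_vdm0 (p - m) (m + k) (p+1) S (by omega)
    have h2 : (((p - m : ℕ) : ℤ)) + ((m + k : ℕ) : ℤ) = (p:ℤ) + k := by omega
    rw [← h2]; exact h.symm
  calc ∑ k ∈ Finset.range (a + 1), C a k * C b ((m : ℤ) + k) * C k c * C ((p : ℤ) + k) S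
      = ∑ k ∈ Finset.range (a + 1), C (a:ℤ) (c:ℤ) *
          (C ((a - c : ℕ):ℤ) ((k:ℤ) - c) * (C (b:ℤ) ((m:ℤ) + k) * C ((p:ℤ) + k) S)) := by
        refine Finset.sum_congr rfl fun k _ => ?_
        have h := C_trinom (a:ℤ) (k:ℤ) (c:ℤ)
        rw [show ((a - c : ℕ):ℤ) = (a:ℤ) - c by omega]
        linear_combination (C (b:ℤ) ((m:ℤ) + k) * C ((p:ℤ) + k) S) * h
    _ = C (a:ℤ) (c:ℤ) * ∑ i ∈ Finset.range (p+1), ∑ k ∈ Finset.range (a+1),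
          (C ((p - m : ℕ):ℤ) (i:ℤ) * C (b:ℤ) (S - i)) *
          (C ((a - c : ℕ):ℤ) ((k:ℤ) - c) * C ((b:ℤ) - S + i) ((m:ℤ) + k - S + i)) := by
        rw [← Finset.mul_sum, Finset.sum_comm]
        congr 1
        refine Finset.sum_congr rfl fun k _ => ?_
        rw [hv k, Finset.mul_sum, Finset.mul_sum]
        refine Finset.sum_congr rfl fun i _ => ?_
        have h := C_trinom (b:ℤ) ((m + k : ℕ):ℤ) (S - i)
        rw [show ((m + k : ℕ):ℤ) = (m:ℤ) + k by omega] at h ⊢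
        rw [show ((m:ℤ) + k - (S - i)) = (m:ℤ) + k - S + i by ring,
          show ((b:ℤ) - (S - i)) = (b:ℤ) - S + i by ring] at h
        linear_combination (C ((a - c : ℕ):ℤ) ((k:ℤ) - c) * C ((p - m : ℕ):ℤ) (i:ℤ)) * h
    _ = C (a:ℤ) (c:ℤ) * ∑ i ∈ Finset.range (p+1),
          (C ((p - m : ℕ):ℤ) (i:ℤ) * C (b:ℤ) (S - i)) * C (i:ℤ) ((m:ℤ) + c + i - b) := by
        congr 1
        refine Finset.sum_congr rfl fun i _ => ?_
        by_cases hi : a - c ≤ i ∧ c + i ≥ a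
        · rw [← Finset.mul_sum]
          congr 1
          -- inner sum equals C i (m + c + i - b)
          have hvv : ((c + i - a : ℕ):ℤ) = (b:ℤ) - S + i := by rw [hS]; omega
          have hrefl := Finset.sum_range_reflect
            (fun k => C ((a - c : ℕ):ℤ) ((k:ℤ) - c) * C ((b:ℤ) - S + i) ((m:ℤ) + k - S + i)) (a+1)
          rw [← hrefl]
          have : ∀ j ∈ Finset.range (a+1),
              C ((a - c : ℕ):ℤ) (((a + 1 - 1 - j : ℕ):ℤ) - c) *
                C ((b:ℤ) - S + i) ((m:ℤ) + ((a + 1 - 1 - j : ℕ):ℤ) - S + i)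
              = C ((a - c : ℕ):ℤ) (j:ℤ) * C ((c + i - a : ℕ):ℤ) (((m:ℤ) + c + i - b) - j) := by
            intro j hj
            have hj' : j ≤ a := by have := Finset.mem_range.mp hj; omega
            rw [show ((a + 1 - 1 - j : ℕ):ℤ) = (a:ℤ) - j by omega]
            rw [show ((a:ℤ) - j - c) = ((a - c : ℕ):ℤ) - j by omega]
            rw [← C_symm (by positivity) (j:ℤ), hvv]
            congr 1
            rw [hS]; ring_nf
          rw [Finset.sum_congr rfl this]
          have h := C_vdm0 (a - c) (c + i - a) (a+1) ((m:ℤ) + c + i - b) (by omega)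
          rw [h, show (((a - c : ℕ):ℤ) + ((c + i - a : ℕ):ℤ)) = (i:ℤ) by omega]
        · -- i < a - c : C b (S - i) = 0
          rw [show C (b:ℤ) (S - i) = 0 from C_eq_zero (by intro ⟨g1,g2⟩; rw [hS] at g1 g2; omega)]
          simp
    _ = C (a:ℤ) (c:ℤ) * (C ((p:ℤ) - m) ((b:ℤ) - c - m) * ∑ i ∈ Finset.range (p+1),
          C (((p - m : ℕ):ℤ) - ((b:ℤ) - c - m)) ((i:ℤ) - ((b:ℤ) - c - m)) * C (b:ℤ) (S - i)) := by
        congr 1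
        rw [Finset.mul_sum]
        refine Finset.sum_congr rfl fun i _ => ?_
        have hsy : C (i:ℤ) ((m:ℤ) + c + i - b) = C (i:ℤ) ((b:ℤ) - c - m) := by
          rw [show ((m:ℤ) + c + i - b) = (i:ℤ) - ((b:ℤ) - c - m) by ring]
          exact (C_symm (by positivity) ((b:ℤ) - c - m)).symm
        have h := C_trinom (((p - m : ℕ):ℤ)) (i:ℤ) ((b:ℤ) - c - m)
        rw [show C (((p - m : ℕ)):ℤ) ((b:ℤ) - c - m) = C ((p:ℤ) - m) ((b:ℤ) - c - m) by
          rw [show (((p - m : ℕ)):ℤ) = (p:ℤ) - m by omega]] at h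
        rw [hsy]
        linear_combination C (b:ℤ) (S - i) * h
    _ = C ((p:ℤ) - m) ((b:ℤ) - c - m) * C ((p:ℤ) + c) ((m:ℤ) + a) * C a c := by
        by_cases hb : c + m ≤ b ∧ b ≤ p + c
        · have h := C_vdm (p + c - b) b (b - c - m) (p+1) S (by omega)
          rw [show (((p + c - b : ℕ):ℤ) + ((b:ℕ):ℤ)) = (p:ℤ) + c by omega,
            show (S - ((b - c - m : ℕ):ℤ)) = (m:ℤ) + a by rw [hS]; omega] at h
          rw [show (((p - m : ℕ):ℤ) - ((b:ℤ) - c - m)) = (((p + c - b : ℕ)):ℤ) by omega,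
            show ((b:ℤ) - c - m) = (((b - c - m : ℕ)):ℤ) by omega, h]
          ring
        · rw [show C ((p:ℤ) - m) ((b:ℤ) - c - m) = 0 from C_eq_zero (by intro ⟨g1,g2⟩; omega)]
          ring
end
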